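/- arXiv:1902.05003 — 6 statements merged into one kernel-verified Lean document; each statement's English description precedes it below -/
import Mathlib

section
/- For all u, v in the open unit ball B of ℝⁿ, the Euclidean norm of the Möbius sum satisfies (‖u‖ − ‖v‖)/(1 + ‖u‖‖v‖) ≤ ‖u ⊕ v‖. -/
open Real

noncomputable def mobiusAdd {n : ℕ} (u v : EuclideanSpace ℝ (Fin n)) :
    EuclideanSpace ℝ (Fin n) :=
  (1 + 2 * (inner ℝ u v : ℝ) + ‖u‖ ^ 2 * ‖v‖ ^ 2)⁻¹ •
    ((1 + 2 * (inner ℝ u v : ℝ) + ‖v‖ ^ 2) • u + (1 - ‖u‖ ^ 2) • v)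

theorem mobius_norm_lower_bound {n : ℕ} (u v : EuclideanSpace ℝ (Fin n))
    (hu : ‖u‖ < 1) (hv : ‖v‖ < 1) :
    (‖u‖ - ‖v‖) / (1 + ‖u‖ * ‖v‖) ≤ ‖mobiusAdd u v‖ := by
  set x := ‖u‖ with hxdef
  set y := ‖v‖ with hydef
  set t : ℝ := inner ℝ u v with ht
  have hx0 : 0 ≤ x := norm_nonneg u
  have hy0 : 0 ≤ y := norm_nonneg v
  have hcs : |t| ≤ x * y := abs_real_inner_le_norm u v
  have ht1 : -(x*y) ≤ t := neg_le_of_abs_le hcs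
  have ht2 : t ≤ x*y := le_of_abs_le hcs
  have hxy : x*y < 1 := by nlinarith
  have hD : (0:ℝ) < 1 + 2*t + x^2*y^2 := by nlinarith [sq_nonneg (1 - x*y)]
  have hden : (0:ℝ) < 1 + x*y := by nlinarith
  have hnorm_sq : ‖mobiusAdd u v‖^2 = (x^2 + 2*t + y^2) / (1 + 2*t + x^2*y^2) := by
    have hN : ‖(1 + 2*t + y^2) • u + (1 - x^2) • v‖^2
        = (x^2+2*t+y^2)*(1+2*t+x^2*y^2) := by
      have hc : (inner ℝ v u : ℝ) = t := by rw [real_inner_comm]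
      have h1 : ‖(1 + 2*t + y^2) • u‖^2 = (1 + 2*t + y^2)^2 * x^2 := by
        rw [norm_smul, mul_pow, Real.norm_eq_abs, sq_abs]
      have h2 : ‖(1 - x^2) • v‖^2 = (1 - x^2)^2 * y^2 := by
        rw [norm_smul, mul_pow, Real.norm_eq_abs, sq_abs]
      rw [← real_inner_self_eq_norm_sq ((1 + 2*t + y^2) • u + (1 - x^2) • v)]
      simp only [inner_add_left, inner_add_right, real_inner_smul_left,
        real_inner_smul_right, real_inner_self_eq_norm_sq]
      rw [h1, h2, hc]
      try rw [← ht]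
      ring
    have : mobiusAdd u v
        = (1 + 2*t + x^2*y^2)⁻¹ • ((1 + 2*t + y^2) • u + (1 - x^2) • v) := by
      rw [mobiusAdd, ← ht, ← hxdef, ← hydef]
    rw [this, norm_smul, mul_pow, hN, norm_inv, Real.norm_eq_abs, abs_of_pos hD]
    field_simp
  rcases le_or_gt x y with h | h
  · exact le_trans (div_nonpos_of_nonpos_of_nonneg (by linarith) hden.le)
      (norm_nonneg _)
  · have hL0 : 0 ≤ (x - y)/(1 + x*y) := div_nonneg (by linarith) hden.le
    have key : ((x-y)/(1+x*y))^2 ≤ ‖mobiusAdd u v‖^2 := by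
      rw [hnorm_sq, div_pow]
      apply div_le_div₀
      · nlinarith [sq_nonneg (x-y)]
      · nlinarith
      · exact hD
      · nlinarith
    calc (x-y)/(1+x*y) = Real.sqrt (((x-y)/(1+x*y))^2) := (Real.sqrt_sq hL0).symm
      _ ≤ Real.sqrt (‖mobiusAdd u v‖^2) := Real.sqrt_le_sqrt key
      _ = ‖mobiusAdd u v‖ := Real.sqrt_sq (norm_nonneg _)
end

section
/- The function ‖·‖_T defined by ‖v‖_T = arctan ‖v‖ on the open unit ball is subadditive with respect to Möbius addition: for all x, y ∈ B, ‖x‖_T − ‖y‖_T ≤ ‖x ⊕ y‖_T ≤ ‖x‖_T + ‖y‖_T. -/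
open Real

lemma mobius_aux (a b c w : ℝ) (ha0 : 0 ≤ a) (hb0 : 0 ≤ b) (hx : a < 1) (hy : b < 1)
    (hc1 : c ≤ a * b) (hc2 : -(a * b) ≤ c) (hw0 : 0 ≤ w)
    (hwsq : w ^ 2 = (a ^ 2 + 2 * c + b ^ 2) / (1 + 2 * c + a ^ 2 * b ^ 2)) :
    arctan a - arctan b ≤ arctan w ∧ arctan w ≤ arctan a + arctan b := by
  have hab0 : 0 ≤ a * b := mul_nonneg ha0 hb0
  have hab1 : a * b < 1 := by nlinarith
  have hD : 0 < 1 + 2 * c + a ^ 2 * b ^ 2 := by nlinarith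
  have hnum : 0 ≤ a ^ 2 + 2 * c + b ^ 2 := by nlinarith [sq_nonneg (a - b)]
  have h1a : 0 ≤ 1 - a ^ 2 := by nlinarith
  have h1b : 0 ≤ 1 - b ^ 2 := by nlinarith
  constructor
  · have key : arctan a - arctan b = arctan ((a - b) / (1 + a * b)) := by
      have h : a * (-b) < 1 := by nlinarith
      have h2 := arctan_add h
      rw [arctan_neg] at h2
      rw [sub_eq_add_neg, h2]
      ring_nf
    rw [key]
    apply arctan_strictMono.monotone
    rcases le_or_gt a b with hab | hab
    · exact le_trans (div_nonpos_of_nonpos_of_nonneg (by linarith) (by linarith)) hw0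
    · have h1ab : (0:ℝ) < 1 + a * b := by linarith
      have hsq : ((a - b) / (1 + a * b)) ^ 2 ≤ w ^ 2 := by
        rw [hwsq, div_pow, div_le_div_iff₀ (by positivity) hD]
        rcases eq_or_lt_of_le hab0 with hp | hp
        · have hc0 : c = 0 := le_antisymm (by linarith) (by linarith)
          rw [hc0]; nlinarith
        · nlinarith [mul_nonneg (mul_nonneg (show (0:ℝ) ≤ c + a * b by linarith) hp.le)
              (sq_nonneg (1 + a * b)),
            mul_nonneg (mul_nonneg (show (0:ℝ) ≤ a * b - c by linarith) hp.le)
              (sq_nonneg (a - b)), hp]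
      nlinarith [div_nonneg (by linarith : (0:ℝ) ≤ a - b) h1ab.le]
  · rw [arctan_add hab1]
    apply arctan_strictMono.monotone
    have h1ab : (0:ℝ) < 1 - a * b := by linarith
    have hsq : w ^ 2 ≤ ((a + b) / (1 - a * b)) ^ 2 := by
      rw [hwsq, div_pow, div_le_div_iff₀ hD (by positivity)]
      nlinarith [mul_nonneg (mul_nonneg (show (0:ℝ) ≤ a * b - c by linarith) h1a) h1b,
        mul_nonneg hnum hab0]
    nlinarith [div_nonneg (by linarith : (0:ℝ) ≤ a + b) h1ab.le]

theorem mobius_arctan_subadditive {n : ℕ} (x y : EuclideanSpace ℝ (Fin n))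
    (hx : ‖x‖ < 1) (hy : ‖y‖ < 1) :
    arctan ‖x‖ - arctan ‖y‖ ≤ arctan ‖mobiusAdd x y‖ ∧
    arctan ‖mobiusAdd x y‖ ≤ arctan ‖x‖ + arctan ‖y‖ := by
  have hcab := abs_le.mp (abs_real_inner_le_norm x y)
  have hD : 0 < 1 + 2 * (inner ℝ x y : ℝ) + ‖x‖ ^ 2 * ‖y‖ ^ 2 := by
    have h2 : (0:ℝ) < (1 - ‖x‖ * ‖y‖) ^ 2 := by
      apply pow_pos
      nlinarith [norm_nonneg x, norm_nonneg y]
    nlinarith [hcab.1, h2]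
  refine mobius_aux ‖x‖ ‖y‖ (inner ℝ x y : ℝ) ‖mobiusAdd x y‖ (norm_nonneg x) (norm_nonneg y)
    hx hy hcab.2 hcab.1 (norm_nonneg _) ?_
  have hN : ‖(1 + 2 * (inner ℝ x y : ℝ) + ‖y‖ ^ 2) • x + (1 - ‖x‖ ^ 2) • y‖ ^ 2 =
      (1 + 2 * (inner ℝ x y : ℝ) + ‖x‖ ^ 2 * ‖y‖ ^ 2) *
        (‖x‖ ^ 2 + 2 * (inner ℝ x y : ℝ) + ‖y‖ ^ 2) := by
    rw [norm_add_sq_real, norm_smul, norm_smul, real_inner_smul_left,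
      real_inner_smul_right, Real.norm_eq_abs, Real.norm_eq_abs, mul_pow, mul_pow,
      sq_abs, sq_abs]
    ring
  have key : ∀ D num : ℝ, 0 < D → (D⁻¹) ^ 2 * (D * num) = num / D := by
    intro D num h
    field_simp
  rw [mobiusAdd, norm_smul, mul_pow, hN, norm_inv, Real.norm_eq_abs, abs_of_pos hD]
  exact key _ _ hD
end

section
/- The function d_T(x, y) = arctan ‖(−x) ⊕ y‖ is a metric on the open unit ball B of ℝⁿ, i.e. it is nonnegative, vanishes exactly on the diagonal, is symmetric, and satisfies the triangle inequality. -/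
open Real

lemma norm_mobiusAdd_neg {n : ℕ} (x y : EuclideanSpace ℝ (Fin n))
    (hx : ‖x‖ < 1) (hy : ‖y‖ < 1) :
    ‖mobiusAdd (-x) y‖ =
      ‖x - y‖ / Real.sqrt (‖x - y‖ ^ 2 + (1 - ‖x‖ ^ 2) * (1 - ‖y‖ ^ 2)) := by
  have hP : (inner ℝ x y : ℝ) ≤ ‖x‖ * ‖y‖ := real_inner_le_norm x y
  have hx0 : (0:ℝ) ≤ ‖x‖ := norm_nonneg x
  have hy0 : (0:ℝ) ≤ ‖y‖ := norm_nonneg y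
  set P : ℝ := (inner ℝ x y : ℝ) with hPdef
  have hxy1 : ‖x‖ * ‖y‖ < 1 := by nlinarith
  have hd : 0 < 1 - 2 * P + ‖x‖ ^ 2 * ‖y‖ ^ 2 := by
    have h1 : 0 < (1 - ‖x‖ * ‖y‖) * (1 - ‖x‖ * ‖y‖) :=
      mul_pos (by linarith) (by linarith)
    nlinarith [hP, h1]
  set d : ℝ := 1 - 2 * P + ‖x‖ ^ 2 * ‖y‖ ^ 2 with hddef
  set s : ℝ := 1 - 2 * P + ‖y‖ ^ 2 with hsdef
  set t : ℝ := 1 - ‖x‖ ^ 2 with htdef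
  have hm : mobiusAdd (-x) y = d⁻¹ • (s • (-x) + t • y) := by
    simp only [mobiusAdd, inner_neg_left, norm_neg]
    have e1 : (1 + 2 * -P + ‖x‖ ^ 2 * ‖y‖ ^ 2) = d := by rw [hddef]; ring
    have e2 : (1 + 2 * -P + ‖y‖ ^ 2) = s := by rw [hsdef]; ring
    rw [e1, e2]
  have hv : ‖s • (-x) + t • y‖ ^ 2 = ‖x - y‖ ^ 2 * d := by
    rw [norm_add_sq_real, real_inner_smul_left, real_inner_smul_right, inner_neg_left,
      norm_smul, norm_smul, norm_neg, norm_sub_sq_real, Real.norm_eq_abs, Real.norm_eq_abs,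
      mul_pow, mul_pow, sq_abs, sq_abs, hddef, hsdef, htdef]
    ring
  have hAnn : (0:ℝ) ≤ ‖x - y‖ ^ 2 := sq_nonneg _
  have hnorm : ‖s • (-x) + t • y‖ = Real.sqrt (‖x - y‖ ^ 2 * d) := by
    rw [← hv, Real.sqrt_sq (norm_nonneg _)]
  have hdd : ‖x - y‖ ^ 2 + t * (1 - ‖y‖ ^ 2) = d := by
    rw [norm_sub_sq_real, htdef, hddef]; ring
  rw [hm, norm_smul, hnorm, Real.norm_eq_abs, abs_inv, abs_of_pos hd,
    Real.sqrt_mul hAnn d, Real.sqrt_sq (norm_nonneg _), hdd]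
  have hsd : 0 < Real.sqrt d := Real.sqrt_pos.2 hd
  rw [inv_mul_eq_div, div_eq_div_iff hd.ne' hsd.ne', mul_assoc, Real.mul_self_sqrt hd.le]

set_option maxHeartbeats 1000000 in
lemma ptolemy_key {n : ℕ} (x y z : EuclideanSpace ℝ (Fin n))
    (hx : ‖x‖ < 1) (hy : ‖y‖ < 1) (hz : ‖z‖ < 1) :
    (1 - ‖y‖ ^ 2) * ‖x - z‖ ≤
      ‖x - y‖ * Real.sqrt (‖y - z‖ ^ 2 + (1 - ‖y‖ ^ 2) * (1 - ‖z‖ ^ 2)) +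
      ‖y - z‖ * Real.sqrt (‖x - y‖ ^ 2 + (1 - ‖x‖ ^ 2) * (1 - ‖y‖ ^ 2)) := by
  rcases eq_or_ne y 0 with rfl | hy0
  · have e1 : ‖(0:EuclideanSpace ℝ (Fin n)) - z‖ ^ 2 + (1 - ‖(0:EuclideanSpace ℝ (Fin n))‖ ^ 2) * (1 - ‖z‖ ^ 2) = 1 := by
      rw [zero_sub, norm_neg, norm_zero]; ring
    have e2 : ‖x - (0:EuclideanSpace ℝ (Fin n))‖ ^ 2 + (1 - ‖x‖ ^ 2) * (1 - ‖(0:EuclideanSpace ℝ (Fin n))‖ ^ 2) = 1 := by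
      rw [sub_zero, norm_zero]; ring
    rw [e1, e2]
    simp only [norm_zero, sub_zero, zero_sub, norm_neg, Real.sqrt_one]
    have := norm_sub_le x z
    nlinarith [norm_nonneg x, norm_nonneg z, norm_nonneg (x - z)]
  · have hY : (0:ℝ) < ‖y‖ := norm_pos_iff.2 hy0
    have hY2 : (0:ℝ) < ‖y‖ ^ 2 := by positivity
    set w : EuclideanSpace ℝ (Fin n) := (‖y‖ ^ 2)⁻¹ • y with hwdef
    have hww : ‖w‖ ^ 2 = (‖y‖ ^ 2)⁻¹ := by
      rw [hwdef, norm_smul, Real.norm_eq_abs, mul_pow, sq_abs]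
      field_simp
    have hxw : (inner ℝ x w : ℝ) = (‖y‖ ^ 2)⁻¹ * (inner ℝ x y : ℝ) :=
      real_inner_smul_right x y _
    have hzw : (inner ℝ z w : ℝ) = (‖y‖ ^ 2)⁻¹ * (inner ℝ z y : ℝ) :=
      real_inner_smul_right z y _
    have dxw : ‖x - w‖ = Real.sqrt (‖x - y‖ ^ 2 + (1 - ‖x‖ ^ 2) * (1 - ‖y‖ ^ 2)) / ‖y‖ := by
      have h1 : ‖x - w‖ ^ 2 = (‖x - y‖ ^ 2 + (1 - ‖x‖ ^ 2) * (1 - ‖y‖ ^ 2)) / ‖y‖ ^ 2 := by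
        rw [norm_sub_sq_real x w, hxw, hww, norm_sub_sq_real x y]
        field_simp
        ring
      have harg : (0:ℝ) ≤ ‖x - y‖ ^ 2 + (1 - ‖x‖ ^ 2) * (1 - ‖y‖ ^ 2) := by
        have h9 : (0:ℝ) ≤ (1 - ‖x‖ ^ 2) * (1 - ‖y‖ ^ 2) :=
          mul_nonneg (by nlinarith [norm_nonneg x]) (by nlinarith [norm_nonneg y])
        nlinarith [sq_nonneg ‖x - y‖]
      rw [← Real.sqrt_sq (norm_nonneg (x - w)), h1, Real.sqrt_div harg,
        Real.sqrt_sq hY.le]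
    have dzw : ‖z - w‖ = Real.sqrt (‖y - z‖ ^ 2 + (1 - ‖y‖ ^ 2) * (1 - ‖z‖ ^ 2)) / ‖y‖ := by
      have h1 : ‖z - w‖ ^ 2 = (‖y - z‖ ^ 2 + (1 - ‖y‖ ^ 2) * (1 - ‖z‖ ^ 2)) / ‖y‖ ^ 2 := by
        rw [norm_sub_sq_real z w, hzw, hww, norm_sub_sq_real y z,
          real_inner_comm y z]
        field_simp
        ring
      have harg : (0:ℝ) ≤ ‖y - z‖ ^ 2 + (1 - ‖y‖ ^ 2) * (1 - ‖z‖ ^ 2) := by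
        have h9 : (0:ℝ) ≤ (1 - ‖y‖ ^ 2) * (1 - ‖z‖ ^ 2) :=
          mul_nonneg (by nlinarith [norm_nonneg y]) (by nlinarith [norm_nonneg z])
        nlinarith [sq_nonneg ‖y - z‖]
      rw [← Real.sqrt_sq (norm_nonneg (z - w)), h1, Real.sqrt_div harg,
        Real.sqrt_sq hY.le]
    have dyw : ‖y - w‖ = (1 - ‖y‖ ^ 2) / ‖y‖ := by
      have h1 : y - w = (1 - (‖y‖ ^ 2)⁻¹) • y := by
        rw [hwdef, sub_smul, one_smul]
      rw [h1, norm_smul, Real.norm_eq_abs]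
      have h2 : 1 - (‖y‖ ^ 2)⁻¹ ≤ 0 := by
        have : (1:ℝ) ≤ (‖y‖ ^ 2)⁻¹ := by
          rw [le_inv_comm₀ one_pos hY2]
          · nlinarith
        linarith
      rw [abs_of_nonpos h2, eq_div_iff hY.ne']
      field_simp
      ring
    have H := EuclideanGeometry.mul_dist_le_mul_dist_add_mul_dist x y z w
    rw [dist_eq_norm, dist_eq_norm, dist_eq_norm, dist_eq_norm, dist_eq_norm,
      dist_eq_norm, dxw, dzw, dyw] at H
    have H2 := mul_le_mul_of_nonneg_right H hY.le
    have e3 : ‖x - z‖ * ((1 - ‖y‖ ^ 2) / ‖y‖) * ‖y‖ = (1 - ‖y‖ ^ 2) * ‖x - z‖ := by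
      field_simp
    have e4 : (‖x - y‖ * (Real.sqrt (‖y - z‖ ^ 2 + (1 - ‖y‖ ^ 2) * (1 - ‖z‖ ^ 2)) / ‖y‖) +
        ‖y - z‖ * (Real.sqrt (‖x - y‖ ^ 2 + (1 - ‖x‖ ^ 2) * (1 - ‖y‖ ^ 2)) / ‖y‖)) * ‖y‖ =
        ‖x - y‖ * Real.sqrt (‖y - z‖ ^ 2 + (1 - ‖y‖ ^ 2) * (1 - ‖z‖ ^ 2)) +
        ‖y - z‖ * Real.sqrt (‖x - y‖ ^ 2 + (1 - ‖x‖ ^ 2) * (1 - ‖y‖ ^ 2)) := by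
      field_simp
    rw [e3, e4] at H2
    exact H2

set_option maxHeartbeats 2000000 in
theorem mobius_dT_is_metric {n : ℕ} :
    (∀ x y : EuclideanSpace ℝ (Fin n), ‖x‖ < 1 → ‖y‖ < 1 →
      0 ≤ arctan ‖mobiusAdd (-x) y‖) ∧
    (∀ x y : EuclideanSpace ℝ (Fin n), ‖x‖ < 1 → ‖y‖ < 1 →
      (arctan ‖mobiusAdd (-x) y‖ = 0 ↔ x = y)) ∧
    (∀ x y : EuclideanSpace ℝ (Fin n), ‖x‖ < 1 → ‖y‖ < 1 →
      arctan ‖mobiusAdd (-x) y‖ = arctan ‖mobiusAdd (-y) x‖) ∧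
    (∀ x y z : EuclideanSpace ℝ (Fin n), ‖x‖ < 1 → ‖y‖ < 1 → ‖z‖ < 1 →
      arctan ‖mobiusAdd (-x) z‖ ≤
        arctan ‖mobiusAdd (-x) y‖ + arctan ‖mobiusAdd (-y) z‖) := by
  refine ⟨?_, ?_, ?_, ?_⟩
  · intro x y hx hy
    rw [← Real.arctan_zero]
    exact Real.arctan_strictMono.monotone (norm_nonneg _)
  · intro x y hx hy
    rw [Real.arctan_eq_zero_iff, norm_mobiusAdd_neg x y hx hy]
    have ha : 0 < 1 - ‖x‖ ^ 2 := by nlinarith [norm_nonneg x]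
    have hb : 0 < 1 - ‖y‖ ^ 2 := by nlinarith [norm_nonneg y]
    have hs : 0 < Real.sqrt (‖x - y‖ ^ 2 + (1 - ‖x‖ ^ 2) * (1 - ‖y‖ ^ 2)) := by
      apply Real.sqrt_pos.2; nlinarith [sq_nonneg ‖x - y‖]
    rw [div_eq_zero_iff]
    constructor
    · rintro (h | h)
      · exact sub_eq_zero.1 (norm_eq_zero.1 h)
      · exact absurd h hs.ne'
    · rintro rfl; left; simp
  · intro x y hx hy
    rw [norm_mobiusAdd_neg x y hx hy, norm_mobiusAdd_neg y x hy hx,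
      norm_sub_rev y x, mul_comm (1 - ‖y‖ ^ 2)]
  · intro x y z hx hy hz
    rw [norm_mobiusAdd_neg x z hx hz, norm_mobiusAdd_neg x y hx hy,
      norm_mobiusAdd_neg y z hy hz]
    have ha : 0 < 1 - ‖x‖ ^ 2 := by nlinarith [norm_nonneg x]
    have hb : 0 < 1 - ‖y‖ ^ 2 := by nlinarith [norm_nonneg y]
    have hc : 0 < 1 - ‖z‖ ^ 2 := by nlinarith [norm_nonneg z]
    set u := ‖x - y‖ with hu
    set v := ‖y - z‖ with hv
    set w0 := ‖x - z‖ with hw0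
    set a := 1 - ‖x‖ ^ 2 with hadef
    set b := 1 - ‖y‖ ^ 2 with hbdef
    set c := 1 - ‖z‖ ^ 2 with hcdef
    have hun : 0 ≤ u := norm_nonneg _
    have hvn : 0 ≤ v := norm_nonneg _
    have hwn : 0 ≤ w0 := norm_nonneg _
    set α := Real.sqrt (u ^ 2 + a * b) with hαdef
    set β := Real.sqrt (v ^ 2 + b * c) with hβdef
    set γ := Real.sqrt (w0 ^ 2 + a * c) with hγdef
    have hαpos : 0 < α := Real.sqrt_pos.2 (by nlinarith [sq_nonneg u])
    have hβpos : 0 < β := Real.sqrt_pos.2 (by nlinarith [sq_nonneg v])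
    have hγpos : 0 < γ := Real.sqrt_pos.2 (by nlinarith [sq_nonneg w0])
    have hα2 : α ^ 2 = u ^ 2 + a * b := Real.sq_sqrt (by nlinarith [sq_nonneg u])
    have hβ2 : β ^ 2 = v ^ 2 + b * c := Real.sq_sqrt (by nlinarith [sq_nonneg v])
    have hγ2 : γ ^ 2 = w0 ^ 2 + a * c := Real.sq_sqrt (by nlinarith [sq_nonneg w0])
    have huα : u < α := by
      rw [hαdef, Real.lt_sqrt hun]
      nlinarith
    have hvβ : v < β := by
      rw [hβdef, Real.lt_sqrt hvn]
      nlinarith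
    have hρ1 : 0 ≤ u / α := div_nonneg hun hαpos.le
    have hρ2 : 0 ≤ v / β := div_nonneg hvn hβpos.le
    have hρ1lt : u / α < 1 := (div_lt_one hαpos).2 huα
    have hρ2lt : v / β < 1 := (div_lt_one hβpos).2 hvβ
    have hprod : u / α * (v / β) < 1 := by
      have h := mul_lt_mul' hρ1lt.le hρ2lt hρ2 one_pos
      simpa using h
    -- Ptolemy
    have step1 : b * w0 ≤ u * β + v * α := ptolemy_key x y z hx hy hz
    -- squared comparison
    have hid : (α * β + u * v) ^ 2 = (u * β + v * α) ^ 2 + a * b * (b * c) := by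
      linear_combination (β ^ 2 - v ^ 2) * hα2 + (a * b) * hβ2
    have sq1 : (b * w0) ^ 2 ≤ (u * β + v * α) ^ 2 :=
      pow_le_pow_left₀ (by positivity) step1 2
    have hsq : (w0 * (α * β + u * v)) ^ 2 ≤ (γ * (u * β + v * α)) ^ 2 := by
      have h5 := mul_le_mul_of_nonneg_left sq1 (by positivity : (0:ℝ) ≤ a * c)
      have e : (γ * (u * β + v * α)) ^ 2 - (w0 * (α * β + u * v)) ^ 2 =
          a * c * (u * β + v * α) ^ 2 - a * c * (b * w0) ^ 2 := by
        linear_combination ((u * β + v * α) ^ 2) * hγ2 - (w0 ^ 2) * hid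
      linarith
    have step2 : w0 * (α * β + u * v) ≤ γ * (u * β + v * α) := by
      have hpos2 : 0 ≤ γ * (u * β + v * α) := by positivity
      exact le_of_pow_le_pow_left₀ two_ne_zero hpos2 hsq
    have hden : 0 < α * β + u * v := by positivity
    have step3 : w0 / γ ≤ (u * β + v * α) / (α * β + u * v) := by
      rw [div_le_div_iff₀ hγpos hden]
      linarith [step2]
    have step4 : (u * β + v * α) / (α * β + u * v) =
        (u / α + v / β) / (1 + u / α * (v / β)) := by
      field_simp
    have step5 : (u / α + v / β) / (1 + u / α * (v / β)) ≤
        (u / α + v / β) / (1 - u / α * (v / β)) := by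
      have hpn : 0 ≤ u / α * (v / β) := mul_nonneg hρ1 hρ2
      apply div_le_div_of_nonneg_left (by positivity) (by linarith)
      linarith
    have final : w0 / γ ≤ (u / α + v / β) / (1 - u / α * (v / β)) := by
      rw [step4] at step3; linarith
    calc arctan (w0 / γ) ≤ arctan ((u / α + v / β) / (1 - u / α * (v / β))) :=
          Real.arctan_strictMono.monotone final
      _ = arctan (u / α) + arctan (v / β) := (Real.arctan_add hprod).symm
end

section
/- Left gyrotranslations preserve the gyrometric: for all u, x, y in the open unit ball B of ℝⁿ, ‖(−(u ⊕ x)) ⊕ (u ⊕ y)‖ = ‖(−x) ⊕ y‖. -/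
open Real

lemma mobius_D_pos {n : ℕ} (u v : EuclideanSpace ℝ (Fin n)) (hu : ‖u‖ < 1) (hv : ‖v‖ < 1) :
    0 < 1 + 2 * (inner ℝ u v : ℝ) + ‖u‖ ^ 2 * ‖v‖ ^ 2 := by
  have h1 : -(‖u‖ * ‖v‖) ≤ (inner ℝ u v : ℝ) := neg_le_of_abs_le (abs_real_inner_le_norm u v)
  have huv : ‖u‖ * ‖v‖ < 1 := by
    nlinarith [norm_nonneg u, norm_nonneg v]
  nlinarith [mul_pos (sub_pos.2 huv) (sub_pos.2 huv)]

lemma mobius_Nsq {n : ℕ} (u v : EuclideanSpace ℝ (Fin n)) :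
    ‖(1 + 2 * (inner ℝ u v : ℝ) + ‖v‖ ^ 2) • u + (1 - ‖u‖ ^ 2) • v‖ ^ 2
      = (1 + 2 * (inner ℝ u v : ℝ) + ‖u‖ ^ 2 * ‖v‖ ^ 2) * (‖u‖ ^ 2 + 2 * (inner ℝ u v : ℝ) + ‖v‖ ^ 2) := by
  rw [← real_inner_self_eq_norm_sq]
  simp only [inner_add_left, inner_add_right, real_inner_smul_left, real_inner_smul_right]
  simp only [real_inner_self_eq_norm_sq, real_inner_comm v u]
  ring

lemma mobius_normsq {n : ℕ} (u v : EuclideanSpace ℝ (Fin n)) (hu : ‖u‖ < 1) (hv : ‖v‖ < 1) :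
    ‖mobiusAdd u v‖ ^ 2
      = (‖u‖ ^ 2 + 2 * (inner ℝ u v : ℝ) + ‖v‖ ^ 2) / (1 + 2 * (inner ℝ u v : ℝ) + ‖u‖ ^ 2 * ‖v‖ ^ 2) := by
  have hD := mobius_D_pos u v hu hv
  rw [mobiusAdd, norm_smul, mul_pow, mobius_Nsq u v, norm_inv, Real.norm_eq_abs,
    abs_of_pos hD]
  generalize h : (inner ℝ u v : ℝ) = sc at hD ⊢
  field_simp

lemma mobius_one_sub {n : ℕ} (u v : EuclideanSpace ℝ (Fin n)) (hu : ‖u‖ < 1) (hv : ‖v‖ < 1) :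
    1 - ‖mobiusAdd u v‖ ^ 2
      = (1 - ‖u‖ ^ 2) * (1 - ‖v‖ ^ 2) / (1 + 2 * (inner ℝ u v : ℝ) + ‖u‖ ^ 2 * ‖v‖ ^ 2) := by
  have hD := mobius_D_pos u v hu hv
  rw [mobius_normsq u v hu hv]
  generalize h : (inner ℝ u v : ℝ) = sc at hD ⊢
  field_simp
  ring

lemma mobius_norm_lt {n : ℕ} (u v : EuclideanSpace ℝ (Fin n)) (hu : ‖u‖ < 1) (hv : ‖v‖ < 1) :
    ‖mobiusAdd u v‖ < 1 := by
  have hD := mobius_D_pos u v hu hv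
  have h1 := mobius_one_sub u v hu hv
  have h2 : 0 < (1 - ‖u‖ ^ 2) * (1 - ‖v‖ ^ 2) / (1 + 2 * (inner ℝ u v : ℝ) + ‖u‖ ^ 2 * ‖v‖ ^ 2) := by
    apply div_pos _ hD
    apply mul_pos <;> nlinarith [norm_nonneg u, norm_nonneg v]
  nlinarith [norm_nonneg (mobiusAdd u v)]

lemma mobius_inner_m {n : ℕ} (u x y : EuclideanSpace ℝ (Fin n)) :
    (inner ℝ (mobiusAdd u x) (mobiusAdd u y) : ℝ)
      = ((1 + 2 * (inner ℝ u x : ℝ) + ‖u‖ ^ 2 * ‖x‖ ^ 2)⁻¹ * (1 + 2 * (inner ℝ u y : ℝ) + ‖u‖ ^ 2 * ‖y‖ ^ 2)⁻¹)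
        * ((1 + 2 * (inner ℝ u x : ℝ) + ‖x‖ ^ 2) * (1 + 2 * (inner ℝ u y : ℝ) + ‖y‖ ^ 2) * ‖u‖ ^ 2
          + (1 + 2 * (inner ℝ u x : ℝ) + ‖x‖ ^ 2) * (1 - ‖u‖ ^ 2) * (inner ℝ u y : ℝ)
          + (1 + 2 * (inner ℝ u y : ℝ) + ‖y‖ ^ 2) * (1 - ‖u‖ ^ 2) * (inner ℝ u x : ℝ)
          + (1 - ‖u‖ ^ 2) ^ 2 * (inner ℝ x y : ℝ)) := by
  rw [mobiusAdd, mobiusAdd, real_inner_smul_left, real_inner_smul_right]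
  simp only [inner_add_left, inner_add_right, real_inner_smul_left, real_inner_smul_right]
  simp only [real_inner_self_eq_norm_sq, real_inner_comm x u, real_inner_comm y u]
  ring

lemma mobius_key {n : ℕ} (u x y : EuclideanSpace ℝ (Fin n)) (hu : ‖u‖ < 1) (hx : ‖x‖ < 1) (hy : ‖y‖ < 1) :
    (‖mobiusAdd u x‖ ^ 2 - 2 * (inner ℝ (mobiusAdd u x) (mobiusAdd u y) : ℝ) + ‖mobiusAdd u y‖ ^ 2)
        * (1 - 2 * (inner ℝ x y : ℝ) + ‖x‖ ^ 2 * ‖y‖ ^ 2)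
      = (‖x‖ ^ 2 - 2 * (inner ℝ x y : ℝ) + ‖y‖ ^ 2)
        * (1 - 2 * (inner ℝ (mobiusAdd u x) (mobiusAdd u y) : ℝ) + ‖mobiusAdd u x‖ ^ 2 * ‖mobiusAdd u y‖ ^ 2) := by
  have hD1 := mobius_D_pos u x hu hx
  have hD2 := mobius_D_pos u y hu hy
  rw [mobius_normsq u x hu hx, mobius_normsq u y hu hy, mobius_inner_m u x y]
  generalize (inner ℝ u x : ℝ) = s at hD1 ⊢
  generalize (inner ℝ u y : ℝ) = t at hD2 ⊢
  generalize (inner ℝ x y : ℝ) = w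
  field_simp
  ring

theorem mobius_left_translation_preserves_gyrometric {n : ℕ}
    (u x y : EuclideanSpace ℝ (Fin n)) (hu : ‖u‖ < 1) (hx : ‖x‖ < 1) (hy : ‖y‖ < 1) :
    ‖mobiusAdd (-(mobiusAdd u x)) (mobiusAdd u y)‖ = ‖mobiusAdd (-x) y‖ := by
  set p := mobiusAdd u x with hpdef
  set q := mobiusAdd u y with hqdef
  have hp : ‖p‖ < 1 := mobius_norm_lt u x hu hx
  have hq : ‖q‖ < 1 := mobius_norm_lt u y hu hy
  have hnp : ‖-p‖ < 1 := by rwa [norm_neg]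
  have hnx : ‖-x‖ < 1 := by rwa [norm_neg]
  have hdp := mobius_D_pos (-p) q hnp hq
  have hdx := mobius_D_pos (-x) y hnx hy
  have hsq : ‖mobiusAdd (-p) q‖ ^ 2 = ‖mobiusAdd (-x) y‖ ^ 2 := by
    rw [mobius_normsq (-p) q hnp hq, mobius_normsq (-x) y hnx hy]
    simp only [norm_neg, inner_neg_left] at hdp hdx ⊢
    rw [div_eq_div_iff (ne_of_gt hdp) (ne_of_gt hdx)]
    linear_combination mobius_key u x y hu hx hy
  rw [← Real.sqrt_sq (norm_nonneg (mobiusAdd (-p) q)),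
    ← Real.sqrt_sq (norm_nonneg (mobiusAdd (-x) y)), hsq]
end

section
/- For each x in the open unit ball B, the map S_x = L_x ∘ ι ∘ L_{−x}, where ι(v) = −v and L_u(v) = u ⊕ v, is an involution (S_x ∘ S_x = id on B) whose unique fixed point is x. -/
open Real

open RealInnerProductSpace


lemma mobius_scalar_norm (p A B : ℝ) (h : 1 + 2 * p + A * B ≠ 0) :
    ((1 + 2 * p + A * B)⁻¹) ^ 2
        * ((1 + 2 * p + B) ^ 2 * A + 2 * (1 + 2 * p + B) * (1 - A) * p + (1 - A) ^ 2 * B)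
      = 1 - (1 - A) * (1 - B) / (1 + 2 * p + A * B) := by
  field_simp
  ring

lemma mobius_scalar_out (p A B : ℝ) (h : 1 + 2 * p + A * B ≠ 0) :
    1 + 2 * -(((1 + 2 * p + B) * A + (1 - A) * p) / (1 + 2 * p + A * B))
        + A * (1 - (1 - A) * (1 - B) / (1 + 2 * p + A * B))
      = (1 - A) ^ 2 / (1 + 2 * p + A * B) := by
  have hi := mul_inv_cancel₀ h
  linear_combination (-(1 + A)) * hi

lemma mobius_scalar_F (p A B : ℝ) (h : 1 + 2 * p + A * B ≠ 0) :
    1 + 2 * -(((1 + 2 * p + B) * A + (1 - A) * p) / (1 + 2 * p + A * B))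
        + (1 - (1 - A) * (1 - B) / (1 + 2 * p + A * B))
      = (1 - A) * (1 + 2 * p + B) / (1 + 2 * p + A * B) := by
  have hi := mul_inv_cancel₀ h
  linear_combination (-2) * hi

lemma mobius_final_comb {n : ℕ} (a b : EuclideanSpace ℝ (Fin n)) (p A B : ℝ)
    (hD : 1 + 2 * p + A * B ≠ 0) (h1A : 1 - A ≠ 0) :
    ((1 - A) ^ 2 / (1 + 2 * p + A * B))⁻¹ •
        (((1 - A) * (1 + 2 * p + B) / (1 + 2 * p + A * B)) • (-a)
          + (1 - A) • ((1 + 2 * p + A * B)⁻¹ • ((1 + 2 * p + B) • a + (1 - A) • b))) = b := by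
  match_scalars
  · field_simp
    ring
  · field_simp

section aux

variable {n : ℕ} (a b : EuclideanSpace ℝ (Fin n))

lemma mobius_inner_comb (r s : ℝ) :
    ⟪a, r • a + s • b⟫ = r * ‖a‖ ^ 2 + s * ⟪a, b⟫ := by
  simp only [inner_add_right, real_inner_smul_right, real_inner_self_eq_norm_sq]

lemma mobius_norm_comb (r s : ℝ) :
    ‖r • a + s • b‖ ^ 2 = r ^ 2 * ‖a‖ ^ 2 + 2 * r * s * ⟪a, b⟫ + s ^ 2 * ‖b‖ ^ 2 := by
  rw [norm_add_sq_real, norm_smul, norm_smul, real_inner_smul_left, real_inner_smul_right,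
    mul_pow, mul_pow, Real.norm_eq_abs, Real.norm_eq_abs, sq_abs, sq_abs]
  ring

lemma mobius_inner_smul_comb (t r s : ℝ) :
    ⟪a, t • (r • a + s • b)⟫ = t * (r * ‖a‖ ^ 2 + s * ⟪a, b⟫) := by
  rw [real_inner_smul_right, mobius_inner_comb]

lemma mobius_norm_smul_comb (t r s : ℝ) :
    ‖t • (r • a + s • b)‖ ^ 2
      = t ^ 2 * (r ^ 2 * ‖a‖ ^ 2 + 2 * r * s * ⟪a, b⟫ + s ^ 2 * ‖b‖ ^ 2) := by
  rw [norm_smul, mul_pow, Real.norm_eq_abs, sq_abs, mobius_norm_comb]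

lemma mobius_denom_pos (ha : ‖a‖ < 1) (hb : ‖b‖ < 1) :
    0 < 1 + 2 * ⟪a, b⟫ + ‖a‖ ^ 2 * ‖b‖ ^ 2 := by
  have h1 := abs_le.mp (abs_real_inner_le_norm a b)
  have hab : ‖a‖ * ‖b‖ < 1 := by nlinarith [norm_nonneg a, norm_nonneg b]
  have h2 : (0:ℝ) < (1 - ‖a‖ * ‖b‖) ^ 2 := pow_pos (by linarith) 2
  nlinarith [h1.1, h2]

lemma mobius_norm_sq (ha : ‖a‖ < 1) (hb : ‖b‖ < 1) :
    ‖mobiusAdd a b‖ ^ 2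
      = 1 - (1 - ‖a‖ ^ 2) * (1 - ‖b‖ ^ 2) / (1 + 2 * ⟪a, b⟫ + ‖a‖ ^ 2 * ‖b‖ ^ 2) := by
  have hD := mobius_denom_pos a b ha hb
  have hD' : (1 + 2 * ⟪a, b⟫ + ‖a‖ ^ 2 * ‖b‖ ^ 2) ≠ 0 := ne_of_gt hD
  unfold mobiusAdd
  rw [mobius_norm_smul_comb]
  exact mobius_scalar_norm _ _ _ hD'

lemma mobius_norm_lt_s15 (ha : ‖a‖ < 1) (hb : ‖b‖ < 1) : ‖mobiusAdd a b‖ < 1 := by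
  have hD := mobius_denom_pos a b ha hb
  have h := mobius_norm_sq a b ha hb
  have hpos : 0 < (1 - ‖a‖ ^ 2) * (1 - ‖b‖ ^ 2) / (1 + 2 * ⟪a, b⟫ + ‖a‖ ^ 2 * ‖b‖ ^ 2) := by
    apply div_pos _ hD
    have ha2 : ‖a‖ ^ 2 < 1 := by nlinarith [norm_nonneg a]
    have hb2 : ‖b‖ ^ 2 < 1 := by nlinarith [norm_nonneg b]
    nlinarith
  nlinarith [norm_nonneg (mobiusAdd a b)]

lemma mobius_cancel (ha : ‖a‖ < 1) (hb : ‖b‖ < 1) :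
    mobiusAdd (-a) (mobiusAdd a b) = b := by
  have hD := mobius_denom_pos a b ha hb
  have hD' : (1 + 2 * ⟪a, b⟫ + ‖a‖ ^ 2 * ‖b‖ ^ 2) ≠ 0 := ne_of_gt hD
  have hA : ‖a‖ ^ 2 < 1 := by nlinarith [norm_nonneg a]
  have h1A : (1:ℝ) - ‖a‖ ^ 2 ≠ 0 := by linarith
  -- c = mobiusAdd a b
  have f3 : mobiusAdd a b = (1 + 2 * ⟪a, b⟫ + ‖a‖ ^ 2 * ‖b‖ ^ 2)⁻¹ •
      ((1 + 2 * ⟪a, b⟫ + ‖b‖ ^ 2) • a + (1 - ‖a‖ ^ 2) • b) := rfl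
  have f1 : ⟪a, mobiusAdd a b⟫
      = ((1 + 2 * ⟪a, b⟫ + ‖b‖ ^ 2) * ‖a‖ ^ 2 + (1 - ‖a‖ ^ 2) * ⟪a, b⟫)
        / (1 + 2 * ⟪a, b⟫ + ‖a‖ ^ 2 * ‖b‖ ^ 2) := by
    rw [f3, mobius_inner_smul_comb, inv_mul_eq_div]
  have f2 := mobius_norm_sq a b ha hb
  have step : mobiusAdd (-a) (mobiusAdd a b)
      = (1 + 2 * -⟪a, mobiusAdd a b⟫ + ‖a‖ ^ 2 * ‖mobiusAdd a b‖ ^ 2)⁻¹ •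
        ((1 + 2 * -⟪a, mobiusAdd a b⟫ + ‖mobiusAdd a b‖ ^ 2) • (-a)
          + (1 - ‖a‖ ^ 2) • mobiusAdd a b) := by
    unfold mobiusAdd
    rw [inner_neg_left, norm_neg]
  rw [step, f1, f2]
  rw [mobius_scalar_out ⟪a, b⟫ (‖a‖ ^ 2) (‖b‖ ^ 2) hD',
    mobius_scalar_F ⟪a, b⟫ (‖a‖ ^ 2) (‖b‖ ^ 2) hD', f3]
  exact mobius_final_comb a b ⟪a, b⟫ (‖a‖ ^ 2) (‖b‖ ^ 2) hD' h1A

lemma mobius_add_zero : mobiusAdd a (0 : EuclideanSpace ℝ (Fin n)) = a := by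
  simp [mobiusAdd]

lemma mobius_neg_add_self : mobiusAdd (-a) a = 0 := by
  unfold mobiusAdd
  rw [inner_neg_left, norm_neg, real_inner_self_eq_norm_sq]
  match_scalars
  ring

end aux

theorem mobius_point_reflection {n : ℕ} (x : EuclideanSpace ℝ (Fin n)) (hx : ‖x‖ < 1) :
    ∃ S : EuclideanSpace ℝ (Fin n) → EuclideanSpace ℝ (Fin n),
      S = (fun v => mobiusAdd x (-(mobiusAdd (-x) v))) ∧
      (∀ v, ‖v‖ < 1 → S (S v) = v) ∧
      S x = x ∧
      (∀ y, ‖y‖ < 1 → S y = y → y = x) := by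
  have hx' : ‖-x‖ < 1 := by simpa using hx
  refine ⟨fun v => mobiusAdd x (-(mobiusAdd (-x) v)), rfl, ?_, ?_, ?_⟩
  · intro v hv
    have h1 : ‖mobiusAdd (-x) v‖ < 1 := mobius_norm_lt_s15 _ _ hx' hv
    have h1' : ‖-(mobiusAdd (-x) v)‖ < 1 := by simpa using h1
    simp only
    rw [mobius_cancel x _ hx h1']
    rw [neg_neg]
    have := mobius_cancel (-x) v hx' hv
    rwa [neg_neg] at this
  · simp only
    rw [mobius_neg_add_self, neg_zero, mobius_add_zero]
  · intro y hy hSy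
    simp only at hSy
    have h1 : ‖mobiusAdd (-x) y‖ < 1 := mobius_norm_lt_s15 _ _ hx' hy
    have h1' : ‖-(mobiusAdd (-x) y)‖ < 1 := by simpa using h1
    have h2 : mobiusAdd (-x) (mobiusAdd x (-(mobiusAdd (-x) y))) = -(mobiusAdd (-x) y) :=
      mobius_cancel x _ hx h1'
    rw [hSy] at h2
    have h3 : mobiusAdd (-x) y = 0 := by
      have h5 : (2:ℝ) • mobiusAdd (-x) y = 0 := by
        rw [two_smul]; nth_rewrite 1 [h2]; simp
      exact (smul_eq_zero.mp h5).resolve_left (by norm_num)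
    have h4 : mobiusAdd x (mobiusAdd (-x) y) = y := by
      have := mobius_cancel (-x) y hx' hy
      rwa [neg_neg] at this
    rw [h3, mobius_add_zero] at h4
    exact h4.symm
end

section
/- In the real Clifford algebra of negative Euclidean space ℝⁿ (with eᵢ² = −1 and eᵢeⱼ = −eⱼeᵢ for i ≠ j), for vectors u, v ∈ ℝⁿ with ‖u‖‖v‖ ≠ 1, the element 1 − uv is invertible and (1 − uv)⁻¹ = (1 − vu)/(1 + 2⟨u,v⟩ + ‖u‖²‖v‖²). -/
open Real

/-- The quadratic form of negative Euclidean space: `Q v = -‖v‖²`. -/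
noncomputable def negEuclideanForm (n : ℕ) : QuadraticForm ℝ (EuclideanSpace ℝ (Fin n)) :=
  -(LinearMap.BilinMap.toQuadraticMap (innerₗ (EuclideanSpace ℝ (Fin n))))

lemma negEuclideanForm_apply {n : ℕ} (w : EuclideanSpace ℝ (Fin n)) :
    negEuclideanForm n w = -‖w‖ ^ 2 := by
  simp only [negEuclideanForm, QuadraticMap.neg_apply,
    LinearMap.BilinMap.toQuadraticMap_apply, innerₗ_apply_apply,
    real_inner_self_eq_norm_sq]

lemma key_mul {n : ℕ} (a b : EuclideanSpace ℝ (Fin n)) :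
    (1 - CliffordAlgebra.ι (negEuclideanForm n) a * CliffordAlgebra.ι (negEuclideanForm n) b) *
      (1 - CliffordAlgebra.ι (negEuclideanForm n) b * CliffordAlgebra.ι (negEuclideanForm n) a) =
      algebraMap ℝ _ (1 + 2 * (inner ℝ a b : ℝ) + ‖a‖ ^ 2 * ‖b‖ ^ 2) := by
  set ia := CliffordAlgebra.ι (negEuclideanForm n) a
  set ib := CliffordAlgebra.ι (negEuclideanForm n) b
  have hbb : ib * ib = algebraMap ℝ _ (-‖b‖ ^ 2) := by
    rw [CliffordAlgebra.ι_sq_scalar, negEuclideanForm_apply]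
  have haa : ia * ia = algebraMap ℝ _ (-‖a‖ ^ 2) := by
    rw [CliffordAlgebra.ι_sq_scalar, negEuclideanForm_apply]
  have hswap : ia * ib + ib * ia = algebraMap ℝ _ (-(2 * (inner ℝ a b : ℝ))) := by
    rw [CliffordAlgebra.ι_mul_ι_add_swap]
    congr 1
    simp only [QuadraticMap.polar, negEuclideanForm_apply]
    rw [norm_add_sq_real]
    ring
  have hmid : ia * algebraMap ℝ _ (-‖b‖ ^ 2) * ia = algebraMap ℝ _ (-‖a‖ ^ 2 * -‖b‖ ^ 2) := by
    rw [mul_assoc, Algebra.commutes, ← mul_assoc, haa, ← map_mul]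
  have expand : (1 - ia * ib) * (1 - ib * ia)
      = 1 - (ia * ib + ib * ia) + ia * (ib * ib) * ia := by noncomm_ring
  rw [expand, hswap, hbb, hmid,
    show (1 : CliffordAlgebra (negEuclideanForm n)) = algebraMap ℝ _ 1 from (map_one _).symm,
    ← map_sub, ← map_add]
  congr 1
  ring

theorem clifford_one_sub_mul_invertible {n : ℕ} (u v : EuclideanSpace ℝ (Fin n))
    (h : ‖u‖ * ‖v‖ ≠ 1) :
    IsUnit (1 - CliffordAlgebra.ι (negEuclideanForm n) u * CliffordAlgebra.ι (negEuclideanForm n) v) ∧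
    Ring.inverse
        (1 - CliffordAlgebra.ι (negEuclideanForm n) u * CliffordAlgebra.ι (negEuclideanForm n) v) =
      (1 + 2 * (inner ℝ u v : ℝ) + ‖u‖ ^ 2 * ‖v‖ ^ 2)⁻¹ •
        (1 - CliffordAlgebra.ι (negEuclideanForm n) v * CliffordAlgebra.ι (negEuclideanForm n) u) := by
  set d : ℝ := 1 + 2 * (inner ℝ u v : ℝ) + ‖u‖ ^ 2 * ‖v‖ ^ 2 with hd
  have hcs : -(‖u‖ * ‖v‖) ≤ (inner ℝ u v : ℝ) := neg_le_of_abs_le (abs_real_inner_le_norm u v)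
  have hdpos : 0 < d := by
    have hne : (1 - ‖u‖ * ‖v‖) ≠ 0 := by intro hc; apply h; linarith
    have hsq : 0 < (1 - ‖u‖ * ‖v‖) ^ 2 := (sq_nonneg _).lt_of_ne (Ne.symm (pow_ne_zero 2 hne))
    nlinarith [hsq, hcs]
  have h1 := key_mul u v
  have h2 := key_mul v u
  have h2' : (1 - CliffordAlgebra.ι (negEuclideanForm n) v * CliffordAlgebra.ι (negEuclideanForm n) u) *
      (1 - CliffordAlgebra.ι (negEuclideanForm n) u * CliffordAlgebra.ι (negEuclideanForm n) v)
      = algebraMap ℝ _ d := by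
    rw [h2]; congr 1; rw [hd, real_inner_comm]; ring
  set x := 1 - CliffordAlgebra.ι (negEuclideanForm n) u * CliffordAlgebra.ι (negEuclideanForm n) v
  set y := 1 - CliffordAlgebra.ι (negEuclideanForm n) v * CliffordAlgebra.ι (negEuclideanForm n) u
  have hxy : x * (d⁻¹ • y) = 1 := by
    rw [mul_smul_comm, h1, ← hd, Algebra.algebraMap_eq_smul_one, smul_smul,
      inv_mul_cancel₀ hdpos.ne', one_smul]
  have hyx : (d⁻¹ • y) * x = 1 := by
    rw [smul_mul_assoc, h2', Algebra.algebraMap_eq_smul_one, smul_smul,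
      inv_mul_cancel₀ hdpos.ne', one_smul]
  exact ⟨⟨⟨x, d⁻¹ • y, hxy, hyx⟩, rfl⟩, Ring.inverse_unit ⟨x, d⁻¹ • y, hxy, hyx⟩⟩
end
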